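/- Let p₁, …, p_r be distinct prime numbers and k₁, …, k_r positive natural numbers. Then there exists a modulus m, coprime to each p_j, and a subgroup U of R = (ℤ/mℤ)ˣ such that: (1) the quotient group R/U is cyclic; (2) for each j, the order of the coset of p_j in R/U is a multiple of k_j; and (3) the coset of -1 in R/U has order 2. -/

import Mathlib

open Finset



private lemma geom_aux {R : Type*} [CommRing R] (t : R) (ht : t * t = 0) (i : ℕ) :
    (1 + t) ^ i = 1 + (i : R) * t := by
  induction i with
  | zero => simp
  | succ n ih =>
    rw [pow_succ, ih]
    have : (1 + (n : R) * t) * (1 + t) = 1 + ((n : R) + 1) * t + (n : R) * (t * t) := by ring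
    rw [this, ht]
    push_cast
    ring

private lemma ordlem {ℓ a E w : ℕ} (hℓ : ℓ.Prime) (hw : w.Prime) (hwl : w ≠ ℓ) (ha : 2 ≤ a)
    (hdvd : w ∣ ∑ i ∈ Finset.range ℓ, (a ^ ℓ ^ (E - 1)) ^ i) (hE : 1 ≤ E) :
    ¬ w ∣ a ∧ ∀ u : (ZMod w)ˣ, (u : ZMod w) = (a : ZMod w) → orderOf u = ℓ ^ E := by
  haveI : Fact w.Prime := ⟨hw⟩
  set x : ZMod w := (a : ZMod w) ^ (ℓ ^ (E - 1)) with hx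
  have hsum : ∑ i ∈ Finset.range ℓ, x ^ i = 0 := by
    have h0 : ((∑ i ∈ Finset.range ℓ, (a ^ ℓ ^ (E - 1)) ^ i : ℕ) : ZMod w) = 0 :=
      (ZMod.natCast_eq_zero_iff _ _).2 hdvd
    push_cast at h0
    exact h0
  have hxl : x ^ ℓ = 1 := by
    have := geom_sum_mul x ℓ
    rw [hsum, zero_mul] at this
    have h1 : x ^ ℓ - 1 = 0 := this.symm
    linear_combination h1
  have hwa : ¬ w ∣ a := by
    intro hdvd'
    have h0 : (a : ZMod w) = 0 := (ZMod.natCast_eq_zero_iff _ _).2 hdvd'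
    have hx0 : x = 0 := by
      rw [hx, h0]
      exact zero_pow (pow_pos hℓ.pos _).ne'
    rw [hx0] at hsum
    rw [Finset.sum_eq_single 0 (fun i _ hi => by rw [zero_pow hi]) (fun h => absurd (Finset.mem_range.2 hℓ.pos) h)] at hsum
    simp at hsum
  refine ⟨hwa, ?_⟩
  intro u hu
  have hux : (u : ZMod w) ^ (ℓ ^ (E - 1)) = x := by rw [hu, hx]
  have hupow : u ^ (ℓ ^ E) = 1 := by
    ext
    push_cast
    have : ℓ ^ E = ℓ ^ (E - 1) * ℓ := by
      rw [← pow_succ]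
      congr 1
      omega
    rw [this, pow_mul, hux, hxl]
  have hord : orderOf u ∣ ℓ ^ E := orderOf_dvd_of_pow_eq_one hupow
  obtain ⟨j, hj, hordj⟩ := (Nat.dvd_prime_pow hℓ).1 hord
  rcases lt_or_eq_of_le hj with hjE | hjE
  · exfalso
    have hdvd2 : orderOf u ∣ ℓ ^ (E - 1) := hordj ▸ pow_dvd_pow ℓ (by omega)
    have hu1 : u ^ (ℓ ^ (E - 1)) = 1 := orderOf_dvd_iff_pow_eq_one.1 hdvd2
    have hx1 : x = 1 := by
      rw [← hux, ← Units.val_pow_eq_pow_val, hu1, Units.val_one]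
    rw [hx1] at hsum
    simp only [one_pow, Finset.sum_const, Finset.card_range, nsmul_eq_mul, mul_one] at hsum
    have : w ∣ ℓ := (ZMod.natCast_eq_zero_iff _ _).1 hsum
    exact hwl ((Nat.prime_dvd_prime_iff_eq hw hℓ).1 this)
  · rw [hordj, hjE]

private lemma sq_not_dvd {ℓ a E : ℕ} (hℓ : ℓ.Prime) (ha : 2 ≤ a) (hE : 2 ≤ E) :
    ¬ (ℓ * ℓ ∣ ∑ i ∈ Finset.range ℓ, (a ^ ℓ ^ (E - 1)) ^ i) := by
  intro hdvd
  set x : ℕ := a ^ ℓ ^ (E - 1) with hxdef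
  set N : ℕ := ∑ i ∈ Finset.range ℓ, x ^ i with hNdef
  have hldvd : ℓ ∣ N := dvd_trans ⟨ℓ, rfl⟩ hdvd
  haveI : Fact ℓ.Prime := ⟨hℓ⟩
  -- case ℓ ∣ a
  by_cases hla : ℓ ∣ a
  · have h0 : (a : ZMod ℓ) = 0 := (ZMod.natCast_eq_zero_iff _ _).2 hla
    have hN0 : (N : ZMod ℓ) = 0 := (ZMod.natCast_eq_zero_iff _ _).2 hldvd
    have : (N : ZMod ℓ) = 1 := by
      rw [hNdef]
      push_cast
      rw [hxdef]
      push_cast [h0]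
      rw [zero_pow (pow_pos hℓ.pos _).ne']
      rw [Finset.sum_eq_single 0 (fun i _ hi => by rw [zero_pow hi]) (fun h => absurd (Finset.mem_range.2 hℓ.pos) h)]
      simp
    rw [hN0] at this
    exact one_ne_zero this.symm
  -- now ℓ ∤ a
  by_cases hx1 : (x : ZMod ℓ) = 1
  · -- x ≡ 1 mod ℓ
    rcases hℓ.eq_two_or_odd' with hl2 | hlodd
    · -- ℓ = 2
      subst hl2
      obtain ⟨b, hb⟩ : ∃ b, x = b * b := by
        refine ⟨a ^ 2 ^ (E - 2), ?_⟩
        rw [hxdef, ← pow_add]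
        congr 1
        have : E - 1 = (E - 2) + 1 := by omega
        rw [this, pow_succ]
        ring
      have hbodd : b % 2 = 1 := by
        rcases Nat.even_or_odd b with hbe | hbo
        · exfalso
          obtain ⟨c, hc⟩ := hbe
          apply hla
          have h2x : 2 ∣ x := by
            rw [hb, hc]
            exact ⟨c * (c + c), by ring⟩
          exact hℓ.dvd_of_dvd_pow (show 2 ∣ a ^ 2 ^ (E - 1) from hxdef ▸ h2x)
        · exact Nat.odd_iff.1 hbo
      have hN : N = 1 + x := by
        rw [hNdef, Finset.sum_range_succ, Finset.sum_range_one]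
        simp
      obtain ⟨c, hc⟩ : ∃ c, b = 2 * c + 1 := ⟨b / 2, by omega⟩
      have hxc : x = 4 * (c * c + c) + 1 := by rw [hb, hc]; ring
      rw [hN, hxc] at hdvd
      omega
    · -- ℓ odd
      have hxpos : 1 ≤ x := Nat.one_le_iff_ne_zero.2 (pow_ne_zero _ (by omega))
      have hlx : ℓ ∣ x - 1 := by
        rw [← ZMod.natCast_eq_zero_iff]
        have hcast : ((x - 1 : ℕ) : ZMod ℓ) = (x : ZMod ℓ) - 1 := by
          push_cast [Nat.cast_sub hxpos]
          ring
        rw [hcast, hx1]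
        ring
      obtain ⟨k, hk⟩ := hlx
      have hxk : x = ℓ * k + 1 := by omega
      set R := ZMod (ℓ * ℓ) with hRdef
      have hll0 : ((ℓ : R) * (ℓ : R)) = 0 := by
        have h := ZMod.natCast_self (ℓ * ℓ)
        push_cast at h
        exact h
      set t : R := (ℓ : R) * (k : R) with htdef
      have ht : t * t = 0 := by
        have : t * t = (ℓ : R) * (ℓ : R) * ((k : R) * (k : R)) := by rw [htdef]; ring
        rw [this, hll0, zero_mul]
      have hxR : (x : R) = 1 + t := by
        rw [hxk]
        simp only [R]
        push_cast
        ring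
      have hsdvd : ℓ ∣ ∑ i ∈ Finset.range ℓ, i := by
        have h2 : ℓ ∣ (∑ i ∈ Finset.range ℓ, i) * 2 :=
          ⟨ℓ - 1, by rw [Finset.sum_range_id_mul_two]⟩
        exact (Nat.Coprime.dvd_of_dvd_mul_right (Nat.coprime_two_right.2 hlodd) h2)
      obtain ⟨s', hs'⟩ := hsdvd
      have hNR : (N : R) = (ℓ : R) := by
        have hc : (N : R) = ∑ i ∈ Finset.range ℓ, ((x : R)) ^ i := by
          rw [hNdef]
          simp only [R]
          push_cast
          rfl
        rw [hc]
        have hterm : ∀ i ∈ Finset.range ℓ, ((x : R)) ^ i = 1 + (i : R) * t := by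
          intro i _
          rw [hxR, geom_aux t ht]
        rw [Finset.sum_congr rfl hterm, Finset.sum_add_distrib, Finset.sum_const,
          Finset.card_range, ← Finset.sum_mul]
        have hsum_cast : (∑ i ∈ Finset.range ℓ, (i : R)) = ((∑ i ∈ Finset.range ℓ, i : ℕ) : R) := by
          simp only [R]
          push_cast
          rfl
        rw [hsum_cast, hs']
        simp only [R]
        push_cast
        have : (ℓ : R) * (s' : R) * t = 0 := by
          rw [htdef]
          have h : (ℓ : R) * (s' : R) * ((ℓ : R) * (k : R)) = (ℓ : R) * (ℓ : R) * ((s' : R) * (k : R)) := by ring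
          rw [h, hll0, zero_mul]
        rw [this]
        simp
      have hN0 : (N : R) = 0 := (ZMod.natCast_eq_zero_iff _ _).2 hdvd
      rw [hN0] at hNR
      have : ℓ * ℓ ∣ ℓ := (ZMod.natCast_eq_zero_iff _ _).1 hNR.symm
      have hle := Nat.le_of_dvd hℓ.pos this
      nlinarith [hℓ.two_le]
  · -- ℓ ∤ N in fact
    have hsum : ∑ i ∈ Finset.range ℓ, (x : ZMod ℓ) ^ i = 0 := by
      have := (ZMod.natCast_eq_zero_iff N ℓ).2 hldvd
      rw [hNdef] at this
      push_cast at this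
      exact this
    have hxl : (x : ZMod ℓ) ^ ℓ = 1 := by
      have := geom_sum_mul (x : ZMod ℓ) ℓ
      rw [hsum, zero_mul] at this
      linear_combination this.symm
    rw [ZMod.pow_card] at hxl
    exact hx1 hxl


lemma hasseA (ℓ : ℕ) (hℓ : ℓ.Prime) {a : ℕ} (ha : 2 ≤ a) (F : Finset ℕ) (B : ℕ) :
    ∃ q E : ℕ, q.Prime ∧ q ∉ F ∧ q ≠ ℓ ∧ 2 ≤ E ∧ B ≤ E ∧ ¬ q ∣ a ∧
      ∀ u : (ZMod q)ˣ, (u : ZMod q) = (a : ZMod q) → orderOf u = ℓ ^ E := by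
  set N : ℕ → ℕ := fun E => ∑ i ∈ Finset.range ℓ, (a ^ ℓ ^ (E - 1)) ^ i with hNdef
  -- find a good exponent E
  have hgood : ∃ E, 2 ≤ E ∧ B ≤ E ∧ ∀ w ∈ F, ¬ (w.Prime ∧ w ≠ ℓ ∧ w ∣ N E) := by
    by_contra hbad
    push_neg at hbad
    have hmaps : ∀ E ∈ Finset.Icc (max 2 B) (max 2 B + F.card),
        ∃ w ∈ F, w.Prime ∧ w ≠ ℓ ∧ w ∣ N E := by
      intro E hE
      rw [Finset.mem_Icc] at hE
      exact hbad E (le_trans (le_max_left _ _) hE.1) (le_trans (le_max_right _ _) hE.1)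
    choose f hf1 hf2 using hmaps
    have hcard : F.card < (Finset.Icc (max 2 B) (max 2 B + F.card)).attach.card := by
      rw [Finset.card_attach, Nat.card_Icc]
      omega
    obtain ⟨E1, -, E2, -, hne, heq⟩ := Finset.exists_ne_map_eq_of_card_lt_of_maps_to hcard
      (fun (E : {x // x ∈ Finset.Icc (max 2 B) (max 2 B + F.card)}) _ => hf1 E.1 E.2)
    -- same prime w witnesses two different exact orders
    set w := f E1.1 E1.2
    obtain ⟨hw1, hwl1, hdvd1⟩ := hf2 E1.1 E1.2
    obtain ⟨hw2, hwl2, hdvd2⟩ := hf2 E2.1 E2.2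
    rw [← heq] at hdvd2
    have hE1 : 2 ≤ E1.1 := by have := Finset.mem_Icc.1 E1.2; omega
    have hE2 : 2 ≤ E2.1 := by have := Finset.mem_Icc.1 E2.2; omega
    obtain ⟨hwa, hord1⟩ := ordlem hℓ hw1 hwl1 ha hdvd1 (by omega)
    obtain ⟨-, hord2⟩ := ordlem hℓ hw1 hwl1 ha hdvd2 (by omega)
    have hcop : Nat.Coprime a w := (hw1.coprime_iff_not_dvd.2 hwa).symm
    set u := ZMod.unitOfCoprime a hcop
    have hu : (u : ZMod w) = (a : ZMod w) := ZMod.coe_unitOfCoprime a hcop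
    have h12 : ℓ ^ E1.1 = ℓ ^ E2.1 := by rw [← hord1 u hu, ← hord2 u hu]
    exact hne (Subtype.ext (Nat.pow_right_injective hℓ.two_le h12))
  obtain ⟨E, hE2, hEB, hgoodE⟩ := hgood
  -- size bound : 2 * ℓ < N E
  have hx2l : 2 * ℓ ≤ a ^ ℓ ^ (E - 1) := by
    have h1 : ℓ ≤ 2 ^ (ℓ - 1) := by
      have := Nat.lt_two_pow_self (n := ℓ - 1)
      omega
    have h1' : 2 * ℓ ≤ 2 ^ ℓ := by
      have hℓ1 := hℓ.two_le
      have h2 : 2 ^ ℓ = 2 * 2 ^ (ℓ - 1) := by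
        conv_lhs => rw [show ℓ = (ℓ - 1) + 1 by omega]
        rw [pow_succ]
        ring
      omega
    have hexp : ℓ ≤ ℓ ^ (E - 1) := Nat.le_self_pow (by omega) ℓ
    have h3 : 2 ^ ℓ ≤ 2 ^ ℓ ^ (E - 1) := Nat.pow_le_pow_right (by norm_num) hexp
    have h4 : 2 ^ ℓ ^ (E - 1) ≤ a ^ ℓ ^ (E - 1) := Nat.pow_le_pow_left ha _
    omega
  have hNbig : 2 * ℓ < N E := by
    have hsub : ({0, 1} : Finset ℕ) ⊆ Finset.range ℓ := by
      intro i hi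
      simp only [Finset.mem_insert, Finset.mem_singleton] at hi
      rw [Finset.mem_range]
      rcases hi with h | h <;> (subst h; have := hℓ.two_le; omega)
    have hN1x : 1 + a ^ ℓ ^ (E - 1) ≤ N E := by
      have := Finset.sum_le_sum_of_subset (f := fun i => (a ^ ℓ ^ (E - 1)) ^ i) hsub
      rw [Finset.sum_insert (by simp), Finset.sum_singleton] at this
      simpa using this
    omega
  have hN0 : N E ≠ 0 := by omega
  -- the prime q
  have hvle : (N E).factorization ℓ ≤ 1 := by
    by_contra hv
    exact sq_not_dvd hℓ ha hE2 (by
      have : ℓ ^ 2 ∣ N E := (Nat.Prime.pow_dvd_iff_le_factorization hℓ hN0).2 (by omega)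
      rwa [pow_two] at this)
  obtain ⟨d, hddef⟩ : ∃ d, d = ordCompl[ℓ] (N E) := ⟨_, rfl⟩
  have hd2 : 2 ≤ d := by
    have hmul : ℓ ^ (N E).factorization ℓ * d = N E := by
      rw [hddef]
      exact Nat.ordProj_mul_ordCompl_eq_self _ _
    have hle : ℓ ^ (N E).factorization ℓ ≤ ℓ := by
      calc ℓ ^ (N E).factorization ℓ ≤ ℓ ^ 1 := Nat.pow_le_pow_right hℓ.pos hvle
      _ = ℓ := pow_one ℓ
    nlinarith
  have hq : d.minFac.Prime := Nat.minFac_prime (by omega)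
  have hdd : d ∣ N E := by
    rw [hddef]
    exact Nat.ordCompl_dvd (N E) ℓ
  have hqd : d.minFac ∣ N E := (Nat.minFac_dvd d).trans hdd
  have hql : d.minFac ≠ ℓ := by
    intro h
    apply Nat.not_dvd_ordCompl hℓ hN0
    rw [← hddef]
    exact h ▸ Nat.minFac_dvd d
  have hqF : d.minFac ∉ F := fun hmem => hgoodE _ hmem ⟨hq, hql, hqd⟩
  obtain ⟨hqa, hord⟩ := ordlem hℓ hq hql ha hqd (by omega)
  exact ⟨d.minFac, E, hq, hqF, hql, hE2, hEB, hqa, hord⟩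


-- arithmetic core for factC
private lemma arith_core {ℓ s t a : ℕ} (hℓ : ℓ.Prime) (ht : ¬ ℓ ∣ t) (htpos : 0 < t)
    (ha : 0 < a) :
    ℓ ^ s / Nat.gcd (ℓ ^ s) a
      = ℓ ^ (((ℓ ^ s * t) / Nat.gcd (ℓ ^ s * t) a).factorization ℓ) := by
  have hn0 : ℓ ^ s * t ≠ 0 := Nat.mul_ne_zero (pow_ne_zero _ hℓ.pos.ne') htpos.ne'
  have hls0 : (ℓ : ℕ) ^ s ≠ 0 := pow_ne_zero _ hℓ.pos.ne'
  set v := a.factorization ℓ with hv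
  have hgcd1 : Nat.gcd (ℓ ^ s) a = ℓ ^ (min s v) := by
    apply Nat.dvd_antisymm
    · obtain ⟨j, hj, hjeq⟩ := (Nat.dvd_prime_pow hℓ).1 (Nat.gcd_dvd_left (ℓ ^ s) a)
      have hja : ℓ ^ j ∣ a := hjeq ▸ Nat.gcd_dvd_right (ℓ ^ s) a
      have hjv : j ≤ v := (Nat.Prime.pow_dvd_iff_le_factorization hℓ ha.ne').1 hja
      rw [hjeq]
      exact pow_dvd_pow _ (le_min hj hjv)
    · exact Nat.dvd_gcd (pow_dvd_pow _ (min_le_left _ _))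
        ((pow_dvd_pow _ (min_le_right _ _)).trans (Nat.ordProj_dvd a ℓ))
  have hfactn : (ℓ ^ s * t).factorization ℓ = s := by
    rw [Nat.factorization_mul hls0 htpos.ne', Nat.Prime.factorization_pow hℓ]
    simp [Nat.factorization_eq_zero_of_not_dvd ht]
  have hgcd2 : (Nat.gcd (ℓ ^ s * t) a).factorization ℓ = min s v := by
    rw [Nat.factorization_gcd hn0 ha.ne']
    simp [hfactn, hv]
  have hrhs : ((ℓ ^ s * t) / Nat.gcd (ℓ ^ s * t) a).factorization ℓ = s - min s v := by
    rw [Nat.factorization_div (Nat.gcd_dvd_left _ _)]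
    simp [hfactn, hgcd2]
  rw [hrhs, hgcd1, Nat.pow_div (min_le_left _ _) hℓ.pos]

private lemma factC {ℓ s t n : ℕ} (hℓ : ℓ.Prime) (ht : ¬ ℓ ∣ t) (htpos : 0 < t)
    (hn : n = ℓ ^ s * t) (hdvd : ℓ ^ s ∣ n) (y : ZMod n) :
    addOrderOf (ZMod.castHom hdvd (ZMod (ℓ ^ s)) y)
      = ℓ ^ ((addOrderOf y).factorization ℓ) := by
  subst hn
  haveI : NeZero (ℓ ^ s * t) :=
    ⟨mul_ne_zero (pow_ne_zero _ hℓ.pos.ne') htpos.ne'⟩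
  have hy : y = ((y.val : ℕ) : ZMod (ℓ ^ s * t)) := (ZMod.natCast_zmod_val y).symm
  set a := y.val with ha
  have hcast : ZMod.castHom hdvd (ZMod (ℓ ^ s)) y = ((a : ℕ) : ZMod (ℓ ^ s)) := by
    conv_lhs => rw [hy]
    exact map_natCast _ a
  rw [hcast]
  conv_rhs => rw [hy]
  rcases Nat.eq_zero_or_pos a with ha0 | hapos
  · rw [ha0]
    simp
  · rw [ZMod.addOrderOf_coe a (pow_ne_zero s hℓ.pos.ne'),
      ZMod.addOrderOf_coe a (show (ℓ ^ s * t) ≠ 0 from NeZero.ne _)]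
    exact arith_core hℓ ht htpos hapos

private lemma sylowChar (ℓ q : ℕ) (hℓ : ℓ.Prime) (hq : q.Prime) :
    ∃ (s : ℕ) (χ : (ZMod q)ˣ →* Multiplicative (ZMod (ℓ ^ s))),
      ∀ u : (ZMod q)ˣ, orderOf (χ u) = ℓ ^ ((orderOf u).factorization ℓ) := by
  haveI : Fact q.Prime := ⟨hq⟩
  set n := Nat.card (ZMod q)ˣ with hn
  have hn0 : n ≠ 0 := Nat.card_ne_zero.2 ⟨inferInstance, inferInstance⟩
  set s := n.factorization ℓ with hs
  set t := ordCompl[ℓ] n with htdef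
  have hnst : n = ℓ ^ s * t := (Nat.ordProj_mul_ordCompl_eq_self n ℓ).symm
  have ht : ¬ ℓ ∣ t := Nat.not_dvd_ordCompl hℓ hn0
  have htpos : 0 < t := Nat.ordCompl_pos ℓ hn0
  have hdvd : ℓ ^ s ∣ n := Nat.ordProj_dvd n ℓ
  have e : Multiplicative (ZMod n) ≃* (ZMod q)ˣ := zmodCyclicMulEquiv inferInstance
  refine ⟨s, (AddMonoidHom.toMultiplicative
      (ZMod.castHom hdvd (ZMod (ℓ ^ s))).toAddMonoidHom).comp e.symm.toMonoidHom, ?_⟩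
  intro u
  have h1 : orderOf (e.symm u) = orderOf u := e.symm.orderOf_eq u
  have h2 : addOrderOf (Multiplicative.toAdd (e.symm u)) = orderOf (e.symm u) := by
    rw [← orderOf_ofAdd_eq_addOrderOf]
    rfl
  calc orderOf ((AddMonoidHom.toMultiplicative
      (ZMod.castHom hdvd (ZMod (ℓ ^ s))).toAddMonoidHom).comp e.symm.toMonoidHom u)
      = addOrderOf ((ZMod.castHom hdvd (ZMod (ℓ ^ s))).toAddMonoidHom
          (Multiplicative.toAdd (e.symm u))) := by
        rw [← orderOf_ofAdd_eq_addOrderOf]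
        rfl
    _ = ℓ ^ ((addOrderOf (Multiplicative.toAdd (e.symm u))).factorization ℓ) :=
        factC hℓ ht htpos hnst hdvd _
    _ = ℓ ^ ((orderOf u).factorization ℓ) := by rw [h2, h1]


private lemma ordD {G : Type*} [Group G] {x y : G} {ℓ i j : ℕ} (hℓ : ℓ.Prime)
    (hcomm : Commute x y) (hx : orderOf x = ℓ ^ i) (hy : orderOf y = ℓ ^ j) (hij : i < j) :
    orderOf (x * y) = ℓ ^ j := by
  have hlcm : Nat.lcm (ℓ ^ i) (ℓ ^ j) = ℓ ^ j :=
    Nat.dvd_antisymm (Nat.lcm_dvd (pow_dvd_pow _ hij.le) dvd_rfl) (Nat.dvd_lcm_right _ _)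
  have h1 : orderOf (x * y) ∣ ℓ ^ j := by
    have := hcomm.orderOf_mul_dvd_lcm
    rwa [hx, hy, hlcm] at this
  obtain ⟨k, hk, hke⟩ := (Nat.dvd_prime_pow hℓ).1 h1
  have hyx : y = x⁻¹ * (x * y) := by group
  have hc : Commute x⁻¹ (x * y) := ((Commute.refl x).mul_right hcomm).inv_left
  have h2 : orderOf y ∣ Nat.lcm (orderOf x⁻¹) (orderOf (x * y)) := by
    conv_lhs => rw [hyx]
    exact hc.orderOf_mul_dvd_lcm
  rw [orderOf_inv, hx, hke, hy] at h2
  have hmax : Nat.lcm (ℓ ^ i) (ℓ ^ k) ∣ ℓ ^ (max i k) :=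
    Nat.lcm_dvd (pow_dvd_pow _ (le_max_left _ _)) (pow_dvd_pow _ (le_max_right _ _))
  have h3 : ℓ ^ j ∣ ℓ ^ (max i k) := h2.trans hmax
  have hjmax : j ≤ max i k := (Nat.pow_dvd_pow_iff_le_right hℓ.one_lt).1 h3
  have : k = j := le_antisymm hk (by omega)
  rw [hke, this]

private lemma iotaLem {ℓ S s : ℕ} (hℓ : ℓ.Prime) (hSs : S ≤ s) :
    ∃ ι : Multiplicative (ZMod (ℓ ^ S)) →* Multiplicative (ZMod (ℓ ^ s)),
      ∀ x, orderOf (ι x) = orderOf x := by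
  haveI : NeZero (ℓ ^ S) := ⟨pow_ne_zero _ hℓ.pos.ne'⟩
  set xel : ZMod (ℓ ^ s) := ((ℓ ^ (s - S) : ℕ) : ZMod (ℓ ^ s)) with hxel
  have hpow : (ℓ ^ S) * (ℓ ^ (s - S)) = ℓ ^ s := by
    rw [← pow_add]
    congr 1
    omega
  have h0 : (zmultiplesHom _ xel) ((ℓ ^ S : ℕ) : ℤ) = 0 := by
    show ((ℓ ^ S : ℕ) : ℤ) • xel = 0
    rw [natCast_zsmul, hxel, nsmul_eq_mul]
    push_cast
    rw [← Nat.cast_pow, ← Nat.cast_pow, ← Nat.cast_mul, hpow, ZMod.natCast_self]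
  set g : ZMod (ℓ ^ S) →+ ZMod (ℓ ^ s) := ZMod.lift (ℓ ^ S) ⟨zmultiplesHom _ xel, h0⟩ with hg
  have hgval : ∀ a : ℕ, g ((a : ℕ) : ZMod (ℓ ^ S)) = ((a * ℓ ^ (s - S) : ℕ) : ZMod (ℓ ^ s)) := by
    intro a
    have h1 : ((a : ℕ) : ZMod (ℓ ^ S)) = ((a : ℤ) : ZMod (ℓ ^ S)) := by push_cast; rfl
    rw [h1, hg, ZMod.lift_coe]
    show ((a : ℤ)) • xel = _
    rw [natCast_zsmul, nsmul_eq_mul, hxel]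
    push_cast
    ring
  have hginj : Function.Injective g := by
    rw [injective_iff_map_eq_zero]
    intro y hy0
    have hyval : y = ((y.val : ℕ) : ZMod (ℓ ^ S)) := (ZMod.natCast_zmod_val y).symm
    rw [hyval, hgval] at hy0
    have hdvd : ℓ ^ s ∣ y.val * ℓ ^ (s - S) := (ZMod.natCast_eq_zero_iff _ _).1 hy0
    rw [← hpow] at hdvd
    have hSd : ℓ ^ S ∣ y.val :=
      (mul_dvd_mul_iff_right (show (ℓ:ℕ) ^ (s - S) ≠ 0 from pow_ne_zero _ hℓ.pos.ne')).1 hdvd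
    have hv0 : y.val = 0 := by
      rcases Nat.eq_zero_or_pos y.val with h | h
      · exact h
      · exact absurd (Nat.le_of_dvd h hSd) (not_le.2 (ZMod.val_lt y))
    rw [hyval, hv0]
    simp
  refine ⟨AddMonoidHom.toMultiplicative g, ?_⟩
  intro x
  exact orderOf_injective (AddMonoidHom.toMultiplicative g)
    (fun a b hab => by
      have : g a.toAdd = g b.toAdd := hab
      exact hginj this) x


-- order of a unit with coe = -1 mod an odd prime
private lemma negOneOrder {q : ℕ} (hq : q.Prime) (hq2 : q ≠ 2) (u : (ZMod q)ˣ)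
    (hu : (u : ZMod q) = (-1 : ZMod q)) : orderOf u = 2 := by
  haveI : Fact q.Prime := ⟨hq⟩
  haveI : Fact (2 < q) := ⟨lt_of_le_of_ne hq.two_le (Ne.symm hq2)⟩
  have hune : u = -1 := Units.ext (by rw [hu]; simp)
  subst hune
  apply orderOf_eq_prime
  · ext; simp
  · intro h1
    apply ZMod.neg_one_ne_one (n := q)
    have := congrArg (Units.val) h1
    simpa using this

private lemma gcdpow {ℓ c d : ℕ} (hℓ : 0 < ℓ) : Nat.gcd (ℓ ^ c) (ℓ ^ d) = ℓ ^ (min c d) := by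
  rcases le_total c d with h | h
  · rw [Nat.gcd_eq_left (pow_dvd_pow _ h), min_eq_left h]
  · rw [Nat.gcd_eq_right (pow_dvd_pow _ h), min_eq_right h]

-- order of an ℓ-power-order element raised to ℓ^d
private lemma ordPow {G : Type*} [Group G] {x : G} {ℓ c d : ℕ} (hℓ : ℓ.Prime)
    (hx : orderOf x = ℓ ^ c) : orderOf (x ^ (ℓ ^ d)) = ℓ ^ (c - min c d) := by
  rw [orderOf_pow' _ (pow_ne_zero _ hℓ.pos.ne'), hx, gcdpow hℓ.pos, Nat.pow_div (min_le_left _ _) hℓ.pos]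

private lemma hasseB (ℓ : ℕ) (hℓ : ℓ.Prime) (f : ℕ) (hf : 0 < f) (F : Finset ℕ)
    (A : Finset ℕ) :
    (∀ a ∈ A, ∀ w : ℕ, w.Prime → w ∣ a → w ∈ F) → (∀ a ∈ A, 2 ≤ a) →
    ∃ (m S : ℕ) (χ : (ZMod m)ˣ →* Multiplicative (ZMod (ℓ ^ S))),
      0 < m ∧ (∀ w : ℕ, w.Prime → w ∣ m → w ∉ F) ∧
      (∀ a ∈ A, ∀ u : (ZMod m)ˣ, (u : ZMod m) = (a : ZMod m) →
        ℓ ^ f ∣ orderOf (χ u)) ∧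
      (ℓ = 2 → ∀ u : (ZMod m)ˣ, (u : ZMod m) = (-1 : ZMod m) → orderOf (χ u) = 2) := by
  classical
  induction A using Finset.induction_on with
  | empty =>
    intro _ _
    by_cases hl2 : ℓ = 2
    · subst hl2
      obtain ⟨q, E, hq, hqF, hq2, hE2, hEB, hqa, hordq⟩ :=
        hasseA 2 hℓ (a := 3) (by norm_num) F 2
      obtain ⟨s, χq, hχq⟩ := sylowChar 2 q hℓ hq
      refine ⟨q, s, χq, hq.pos, ?_, by simp, ?_⟩
      · intro w hw hwq
        rwa [(Nat.prime_dvd_prime_iff_eq hw hq).1 hwq]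
      · intro _ u hu
        rw [hχq u, negOneOrder hq hq2 u hu]
        have h2 : (Nat.factorization 2) 2 = 1 := Nat.Prime.factorization_self (by norm_num)
        rw [h2, pow_one]
    · refine ⟨1, 0, 1, one_pos, ?_, by simp, fun h => absurd h hl2⟩
      intro w hw hw1
      exact absurd (Nat.dvd_one.1 hw1) hw.one_lt.ne'
  | @insert a A' haA IH =>
    intro hFA hA
    obtain ⟨m, S, χ, hm0, hmF, hords, hneg⟩ :=
      IH (fun b hb => hFA b (Finset.mem_insert_of_mem hb))
        (fun b hb => hA b (Finset.mem_insert_of_mem hb))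
    have ha2 : 2 ≤ a := hA a (Finset.mem_insert_self a A')
    obtain ⟨q, E, hq, hqF, hqℓ, hE2, hEB, hqa, hordq⟩ :=
      hasseA ℓ hℓ ha2 (F ∪ m.primeFactors) (S + f + A'.card + 2)
    obtain ⟨s, χq, hχq⟩ := sylowChar ℓ q hℓ hq
    have hqm : ¬ q ∣ m := fun h =>
      hqF (Finset.mem_union_right _ (Nat.mem_primeFactors.2 ⟨hq, h, hm0.ne'⟩))
    have hqF0 : q ∉ F := fun h => hqF (Finset.mem_union_left _ h)
    haveI : Fact q.Prime := ⟨hq⟩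
    haveI : NeZero (ℓ ^ s) := ⟨pow_ne_zero _ hℓ.pos.ne'⟩
    haveI : NeZero (ℓ ^ S) := ⟨pow_ne_zero _ hℓ.pos.ne'⟩
    have hcopaq : Nat.Coprime a q := (hq.coprime_iff_not_dvd.2 hqa).symm
    have hEs : E ≤ s := by
      set u0 := ZMod.unitOfCoprime a hcopaq
      have h1 : orderOf (χq u0) = ℓ ^ E := by
        rw [hχq u0, hordq u0 (ZMod.coe_unitOfCoprime a hcopaq),
          Nat.Prime.factorization_pow hℓ]
        simp
      have h2 : orderOf (χq u0) ∣ ℓ ^ s := by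
        have := orderOf_dvd_card (x := χq u0)
        rwa [Fintype.card_multiplicative, ZMod.card] at this
      rw [h1] at h2
      exact (Nat.pow_dvd_pow_iff_le_right hℓ.one_lt).1 h2
    have hSs : S ≤ s := by omega
    obtain ⟨ι, hι⟩ := iotaLem hℓ hSs
    set π₁ : (ZMod (m * q))ˣ →* (ZMod m)ˣ :=
      Units.map (ZMod.castHom (dvd_mul_right m q) (ZMod m)).toMonoidHom with hπ₁
    set π₂ : (ZMod (m * q))ˣ →* (ZMod q)ˣ :=
      Units.map (ZMod.castHom (dvd_mul_left q m) (ZMod q)).toMonoidHom with hπ₂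
    -- pigeonhole choice of d
    set badf : ℕ → ℕ := fun b =>
      if h : IsUnit ((b : ℕ) : ZMod m) ∧ IsUnit ((b : ℕ) : ZMod q) then
        (orderOf (χq h.2.unit)).factorization ℓ - (orderOf (χ h.1.unit)).factorization ℓ
      else 0 with hbadf
    obtain ⟨d, hd1, hd2, hdbad⟩ : ∃ d, 1 ≤ d ∧ d ≤ A'.card + 1 ∧ d ∉ A'.image badf := by
      by_contra hcon
      push_neg at hcon
      have hsub : Finset.Icc 1 (A'.card + 1) ⊆ A'.image badf := fun e he => by
        have h := Finset.mem_Icc.1 he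
        exact hcon e h.1 h.2
      have h1 := Finset.card_le_card hsub
      rw [Nat.card_Icc] at h1
      have h2 := Finset.card_image_le (s := A') (f := badf)
      omega
    set χ' : (ZMod (m * q))ˣ →* Multiplicative (ZMod (ℓ ^ s)) :=
      ((ι.comp (χ.comp π₁)) * ((powMonoidHom (ℓ ^ d)).comp (χq.comp π₂))) with hχ'
    have hval : ∀ u : (ZMod (m * q))ˣ,
        χ' u = ι (χ (π₁ u)) * (χq (π₂ u)) ^ (ℓ ^ d) := fun u => rfl
    have hcoe1 : ∀ u : (ZMod (m * q))ˣ,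
        ((π₁ u : ZMod m)) = ZMod.castHom (dvd_mul_right m q) (ZMod m) ((u : ZMod (m * q))) :=
      fun u => rfl
    have hcoe2 : ∀ u : (ZMod (m * q))ˣ,
        ((π₂ u : ZMod q)) = ZMod.castHom (dvd_mul_left q m) (ZMod q) ((u : ZMod (m * q))) :=
      fun u => rfl
    refine ⟨m * q, s, χ', Nat.mul_pos hm0 hq.pos, ?_, ?_, ?_⟩
    · intro w hw hwmq
      rcases (Nat.Prime.dvd_mul hw).1 hwmq with h | h
      · exact hmF w hw h
      · rwa [(Nat.prime_dvd_prime_iff_eq hw hq).1 h]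
    · intro b hb u hu
      have hu1 : ((π₁ u : ZMod m)) = (b : ZMod m) := by
        rw [hcoe1, hu, map_natCast]
      have hu2 : ((π₂ u : ZMod q)) = (b : ZMod q) := by
        rw [hcoe2, hu, map_natCast]
      -- the old part has some exact ℓ-power order
      obtain ⟨g, hgS, hg⟩ : ∃ g, g ≤ S ∧ orderOf (χ (π₁ u)) = ℓ ^ g := by
        have hdvd : orderOf (χ (π₁ u)) ∣ ℓ ^ S := by
          have := orderOf_dvd_card (x := χ (π₁ u))
          rwa [Fintype.card_multiplicative, ZMod.card] at this
        obtain ⟨g, hgle, hge⟩ := (Nat.dvd_prime_pow hℓ).1 hdvd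
        exact ⟨g, hgle, hge⟩
      have hgι : orderOf (ι (χ (π₁ u))) = ℓ ^ g := by rw [hι, hg]
      rcases Finset.mem_insert.1 hb with hba | hbA
      · -- b = a
        subst hba
        have hordu2 : orderOf (π₂ u) = ℓ ^ E := hordq _ hu2
        have hχq2 : orderOf (χq (π₂ u)) = ℓ ^ E := by
          rw [hχq, hordu2, Nat.Prime.factorization_pow hℓ]
          simp
        have hpow2 : orderOf ((χq (π₂ u)) ^ (ℓ ^ d)) = ℓ ^ (E - min E d) := ordPow hℓ hχq2
        rw [min_eq_right (by omega)] at hpow2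
        have hord : orderOf (χ' u) = ℓ ^ (E - d) := by
          rw [hval]
          exact ordD hℓ (Commute.all _ _) hgι hpow2 (by omega)
        rw [hord]
        exact pow_dvd_pow _ (by omega)
      · -- b ∈ A'
        have hfdvd : ℓ ^ f ∣ orderOf (χ (π₁ u)) := hords b hbA (π₁ u) hu1
        have hfg : f ≤ g := by
          rw [hg] at hfdvd
          exact (Nat.pow_dvd_pow_iff_le_right hℓ.one_lt).1 hfdvd
        set c := (orderOf (π₂ u)).factorization ℓ with hc
        have hχq2 : orderOf (χq (π₂ u)) = ℓ ^ c := hχq _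
        have hpow2 : orderOf ((χq (π₂ u)) ^ (ℓ ^ d)) = ℓ ^ (c - min c d) := ordPow hℓ hχq2
        have hne : g ≠ c - min c d := by
          intro hgc
          have hcd : d ≤ c := by
            by_contra hdc
            rw [min_eq_left (by omega)] at hgc
            omega
          rw [min_eq_right hcd] at hgc
          apply hdbad
          refine Finset.mem_image.2 ⟨b, hbA, ?_⟩
          have hb1 : IsUnit ((b : ℕ) : ZMod m) := ⟨π₁ u, hu1⟩
          have hb2 : IsUnit ((b : ℕ) : ZMod q) := ⟨π₂ u, hu2⟩
          rw [hbadf]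
          simp only
      -- reduce the dite
          rw [dif_pos ⟨hb1, hb2⟩]
          have e1 : (⟨hb1, hb2⟩ : _ ∧ _).1.unit = π₁ u := Units.ext (by
            rw [IsUnit.unit_spec, hu1])
          have e2 : (⟨hb1, hb2⟩ : _ ∧ _).2.unit = π₂ u := Units.ext (by
            rw [IsUnit.unit_spec, hu2])
          rw [e1, e2, hg, hχq2, Nat.Prime.factorization_pow hℓ,
            Nat.Prime.factorization_pow hℓ]
          simp only [Finsupp.single_eq_same]
          omega
        rcases lt_or_gt_of_ne hne with hlt | hgt
        · have hord : orderOf (χ' u) = ℓ ^ (c - min c d) := by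
            rw [hval]
            exact ordD hℓ (Commute.all _ _) hgι hpow2 hlt
          rw [hord]
          exact pow_dvd_pow _ (by omega)
        · have hord : orderOf (χ' u) = ℓ ^ g := by
            rw [hval, mul_comm]
            exact ordD hℓ (Commute.all _ _) hpow2 hgι hgt
          rw [hord]
          exact pow_dvd_pow _ hfg
    · intro hl2 u hu
      have hu1 : ((π₁ u : ZMod m)) = (-1 : ZMod m) := by
        rw [hcoe1, hu, map_neg, map_one]
      have hu2 : ((π₂ u : ZMod q)) = (-1 : ZMod q) := by
        rw [hcoe2, hu, map_neg, map_one]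
      have h1 : orderOf (χ (π₁ u)) = 2 := hneg hl2 _ hu1
      have hord2 : orderOf (π₂ u) = 2 := negOneOrder hq (by rw [← hl2]; exact hqℓ) _ hu2
      have h2 : orderOf (χq (π₂ u)) = 2 := by
        rw [hχq, hord2, hl2]
        have h22 : (Nat.factorization 2) 2 = 1 := Nat.Prime.factorization_self (by norm_num)
        rw [h22, pow_one]
      have h3 : (χq (π₂ u)) ^ (ℓ ^ d) = 1 := by
        apply orderOf_dvd_iff_pow_eq_one.1
        rw [h2, hl2]
        exact dvd_pow_self 2 (by omega)
      rw [hval, h3, mul_one, hι, h1]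


private lemma cyclicProd {G H : Type*} [Group G] [Group H] [Fintype G] [Fintype H]
    (hG : IsCyclic G) (hH : IsCyclic H)
    (hcop : Nat.Coprime (Fintype.card G) (Fintype.card H)) : IsCyclic (G × H) := by
  obtain ⟨g, hg⟩ := hG.exists_generator
  obtain ⟨h, hh⟩ := hH.exists_generator
  have hog : orderOf g = Fintype.card G := by
    rw [orderOf_eq_card_of_forall_mem_zpowers hg, Nat.card_eq_fintype_card]
  have hoh : orderOf h = Fintype.card H := by
    rw [orderOf_eq_card_of_forall_mem_zpowers hh, Nat.card_eq_fintype_card]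
  apply isCyclic_of_orderOf_eq_card ((g, h) : G × H)
  rw [Prod.orderOf_mk, hog, hoh, Nat.Coprime.lcm_eq_mul hcop, Nat.card_eq_fintype_card,
    Fintype.card_prod]

private lemma assemble (f : ℕ) (hf : 0 < f) (A : Finset ℕ) (hA2 : ∀ a ∈ A, 2 ≤ a)
    (L : List ℕ) (hL : ∀ ℓ ∈ L, ℓ.Prime) (hnd : L.Nodup) :
    ∀ (F : Finset ℕ), (∀ a ∈ A, ∀ w, w.Prime → w ∣ a → w ∈ F) →
    ∃ (m : ℕ) (H : Type) (_ : CommGroup H) (_ : Fintype H) (φ : (ZMod m)ˣ →* H),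
      0 < m ∧ (∀ w, w.Prime → w ∣ m → w ∉ F) ∧ IsCyclic H ∧
      (∀ w, w.Prime → w ∣ Fintype.card H → w ∈ L) ∧
      (∀ a ∈ A, ∀ u : (ZMod m)ˣ, (u : ZMod m) = (a : ZMod m) →
        ∀ ℓ ∈ L, ℓ ^ f ∣ orderOf (φ u)) ∧
      (∀ u : (ZMod m)ˣ, (u : ZMod m) = (-1 : ZMod m) →
        orderOf (φ u) ∣ 2 ∧ (2 ∈ L → orderOf (φ u) = 2)) := by
  induction L with
  | nil =>
    intro F hFA
    refine ⟨1, Multiplicative (ZMod 1), inferInstance, inferInstance, 1, one_pos, ?_, ?_, ?_, ?_, ?_⟩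
    · intro w hw hw1
      exact absurd (Nat.dvd_one.1 hw1) hw.one_lt.ne'
    · infer_instance
    · intro w hw hwc
      rw [Fintype.card_multiplicative, ZMod.card] at hwc
      exact absurd (Nat.dvd_one.1 hwc) hw.one_lt.ne'
    · intro a _ u _ ℓ hℓ
      exact absurd hℓ List.not_mem_nil
    · intro u _
      constructor
      · simp only [MonoidHom.one_apply, orderOf_one]
        exact one_dvd 2
      · intro h2
        exact absurd h2 List.not_mem_nil
  | cons ℓ L' IH =>
    intro F hFA
    have hℓp : ℓ.Prime := hL ℓ (List.mem_cons_self (a := ℓ) (l := L'))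
    have hL' : ∀ x ∈ L', x.Prime := fun x hx => hL x (List.mem_cons_of_mem ℓ hx)
    have hℓL' : ℓ ∉ L' := (List.nodup_cons.1 hnd).1
    have hnd' : L'.Nodup := (List.nodup_cons.1 hnd).2
    obtain ⟨m₁, H₁, hCG, hFT, φ₁, hm₁0, hm₁F, hcyc₁, hcard₁, hords₁, hneg₁⟩ :=
      IH hL' hnd' F hFA
    obtain ⟨m₂, S, χ, hm₂0, hm₂F, hords₂, hneg₂⟩ :=
      hasseB ℓ hℓp f hf (F ∪ m₁.primeFactors) A
        (fun a ha w hw hwa => Finset.mem_union_left _ (hFA a ha w hw hwa)) hA2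
    haveI : NeZero (ℓ ^ S) := ⟨pow_ne_zero _ hℓp.pos.ne'⟩
    -- coprimality
    have hcop : Nat.Coprime m₁ m₂ := by
      by_contra hnc
      obtain ⟨w, hw, hwd⟩ := Nat.exists_prime_and_dvd (n := Nat.gcd m₁ m₂) hnc
      exact hm₂F w hw (hwd.trans (Nat.gcd_dvd_right _ _))
        (Finset.mem_union_right _ (Nat.mem_primeFactors.2
          ⟨hw, hwd.trans (Nat.gcd_dvd_left _ _), hm₁0.ne'⟩))
    set π₁ : (ZMod (m₁ * m₂))ˣ →* (ZMod m₁)ˣ :=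
      Units.map (ZMod.castHom (dvd_mul_right m₁ m₂) (ZMod m₁)).toMonoidHom with hπ₁
    set π₂ : (ZMod (m₁ * m₂))ˣ →* (ZMod m₂)ˣ :=
      Units.map (ZMod.castHom (dvd_mul_left m₂ m₁) (ZMod m₂)).toMonoidHom with hπ₂
    set φ : (ZMod (m₁ * m₂))ˣ →* H₁ × Multiplicative (ZMod (ℓ ^ S)) :=
      MonoidHom.prod (φ₁.comp π₁) (χ.comp π₂) with hφ
    have hcoe1 : ∀ u : (ZMod (m₁ * m₂))ˣ,
        ((π₁ u : ZMod m₁)) = ZMod.castHom (dvd_mul_right m₁ m₂) (ZMod m₁)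
          ((u : ZMod (m₁ * m₂))) := fun u => rfl
    have hcoe2 : ∀ u : (ZMod (m₁ * m₂))ˣ,
        ((π₂ u : ZMod m₂)) = ZMod.castHom (dvd_mul_left m₂ m₁) (ZMod m₂)
          ((u : ZMod (m₁ * m₂))) := fun u => rfl
    have hval : ∀ u, φ u = (φ₁ (π₁ u), χ (π₂ u)) := fun u => rfl
    -- card of H₁ is coprime to ℓ
    have hcardcop : Nat.Coprime (Fintype.card H₁) (Fintype.card (Multiplicative (ZMod (ℓ ^ S)))) := by
      rw [Fintype.card_multiplicative, ZMod.card]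
      apply Nat.Coprime.pow_right
      rcases Nat.coprime_or_dvd_of_prime hℓp (Fintype.card H₁) with h | h
      · exact h.symm
      · exact absurd (hcard₁ ℓ hℓp h) hℓL'
    refine ⟨m₁ * m₂, H₁ × Multiplicative (ZMod (ℓ ^ S)), inferInstance, inferInstance, φ,
      Nat.mul_pos hm₁0 hm₂0,
      ?_, ?_, ?_, ?_, ?_⟩
    · intro w hw hwm
      rcases (Nat.Prime.dvd_mul hw).1 hwm with h | h
      · exact hm₁F w hw h
      · exact fun hwF => hm₂F w hw h (Finset.mem_union_left _ hwF)
    · exact cyclicProd hcyc₁ inferInstance hcardcop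
    · intro w hw hwc
      rw [Fintype.card_prod] at hwc
      rcases (Nat.Prime.dvd_mul hw).1 hwc with h | h
      · exact List.mem_cons_of_mem ℓ (hcard₁ w hw h)
      · rw [Fintype.card_multiplicative, ZMod.card] at h
        have : w = ℓ := (Nat.prime_dvd_prime_iff_eq hw hℓp).1 (hw.dvd_of_dvd_pow h)
        rw [this]
        exact List.mem_cons_self (a := ℓ) (l := L')
    · intro a ha u hu ℓ' hℓ'
      have hu1 : ((π₁ u : ZMod m₁)) = (a : ZMod m₁) := by rw [hcoe1, hu, map_natCast]
      have hu2 : ((π₂ u : ZMod m₂)) = (a : ZMod m₂) := by rw [hcoe2, hu, map_natCast]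
      rw [hval, Prod.orderOf_mk]
      rcases List.mem_cons.1 hℓ' with h | h
      · subst h
        exact (hords₂ a ha (π₂ u) hu2).trans (Nat.dvd_lcm_right _ _)
      · exact (hords₁ a ha (π₁ u) hu1 ℓ' h).trans (Nat.dvd_lcm_left _ _)
    · intro u hu
      have hu1 : ((π₁ u : ZMod m₁)) = (-1 : ZMod m₁) := by
        rw [hcoe1, hu, map_neg, map_one]
      have hu2 : ((π₂ u : ZMod m₂)) = (-1 : ZMod m₂) := by
        rw [hcoe2, hu, map_neg, map_one]
      obtain ⟨ho1, ho1'⟩ := hneg₁ (π₁ u) hu1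
      have ho2 : orderOf (χ (π₂ u)) ∣ 2 := by
        apply orderOf_dvd_of_pow_eq_one
        rw [← map_pow]
        have : (π₂ u) ^ 2 = 1 := by
          ext
          push_cast
          rw [hu2]
          ring
        rw [this, map_one]
      rw [hval, Prod.orderOf_mk]
      constructor
      · exact Nat.lcm_dvd ho1 ho2
      · intro h2
        apply Nat.dvd_antisymm (Nat.lcm_dvd ho1 ho2)
        rcases List.mem_cons.1 h2 with h | h
        · have := hneg₂ h.symm (π₂ u) hu2
          rw [← this]
          exact Nat.dvd_lcm_right _ _
        · rw [← ho1' h]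
          exact Nat.dvd_lcm_left _ _


/-- Hasse's lemma on auxiliary moduli: given distinct primes `p₁, …, p_r` and positive
integers `k₁, …, k_r`, there is a modulus `m` coprime to the `p_j` and a subgroup `U` of
`R = (ℤ/mℤ)ˣ` such that `R/U` is cyclic, the order of the coset of `p_j` in `R/U` is a
multiple of `k_j` for each `j`, and the coset of `-1` has order `2` in `R/U`. -/
theorem hasse_lemma (r : ℕ) (p : Fin r → ℕ) (hp : ∀ j, (p j).Prime)
    (hinj : Function.Injective p) (k : Fin r → ℕ) (hk : ∀ j, 0 < k j) :
    ∃ m : ℕ, (∀ j, Nat.Coprime m (p j)) ∧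
      ∃ U : Subgroup (ZMod m)ˣ,
        IsCyclic ((ZMod m)ˣ ⧸ U) ∧
        (∀ j, ∃ u : (ZMod m)ˣ, (u : ZMod m) = ((p j : ℕ) : ZMod m) ∧
          k j ∣ orderOf (QuotientGroup.mk u : (ZMod m)ˣ ⧸ U)) ∧
        orderOf (QuotientGroup.mk (-1 : (ZMod m)ˣ) : (ZMod m)ˣ ⧸ U) = 2 := by
  classical
  set K : ℕ := 2 * ∏ j, k j with hKdef
  have hK0 : 0 < K := by
    rw [hKdef]
    exact Nat.mul_pos two_pos (Finset.prod_pos (fun j _ => hk j))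
  set A : Finset ℕ := Finset.image p Finset.univ with hAdef
  have hA2 : ∀ a ∈ A, 2 ≤ a := by
    intro a ha
    obtain ⟨j, _, rfl⟩ := Finset.mem_image.1 ha
    exact (hp j).two_le
  set L : List ℕ := K.primeFactors.toList with hLdef
  have hLp : ∀ ℓ ∈ L, ℓ.Prime := fun ℓ hℓ =>
    Nat.prime_of_mem_primeFactors (Finset.mem_toList.1 hℓ)
  have hFA : ∀ a ∈ A, ∀ w, w.Prime → w ∣ a → w ∈ A := by
    intro a ha w hw hwa
    obtain ⟨j, _, rfl⟩ := Finset.mem_image.1 ha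
    rwa [(Nat.prime_dvd_prime_iff_eq hw (hp j)).1 hwa]
  obtain ⟨m, H, hCG, hFT, φ, hm0, hmF, hcyc, hcard, hords, hneg⟩ :=
    assemble K hK0 A hA2 L hLp (Finset.nodup_toList _) A hFA
  have hcop : ∀ j, Nat.Coprime m (p j) := by
    intro j
    have hnd : ¬ p j ∣ m := fun hd =>
      hmF (p j) (hp j) hd (Finset.mem_image.2 ⟨j, Finset.mem_univ j, rfl⟩)
    exact ((hp j).coprime_iff_not_dvd.2 hnd).symm
  haveI : IsCyclic H := hcyc
  refine ⟨m, hcop, φ.ker, ?_, ?_, ?_⟩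
  case _ => -- cyclic quotient
    let e := QuotientGroup.quotientKerEquivRange φ
    exact isCyclic_of_surjective e.symm e.symm.surjective
  case _ => -- orders of the p j
    intro j
    set u : (ZMod m)ˣ := ZMod.unitOfCoprime (p j) (hcop j).symm with hu
    have hucoe : (u : ZMod m) = ((p j : ℕ) : ZMod m) := ZMod.coe_unitOfCoprime _ _
    refine ⟨u, hucoe, ?_⟩
    -- order in quotient equals order of φ u
    have horder : orderOf (QuotientGroup.mk u : (ZMod m)ˣ ⧸ φ.ker) = orderOf (φ u) := by
      let e := QuotientGroup.quotientKerEquivRange φ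
      have h1 : orderOf (QuotientGroup.mk u : (ZMod m)ˣ ⧸ φ.ker)
          = orderOf (e (QuotientGroup.mk u)) :=
        (orderOf_injective e.toMonoidHom e.injective _).symm
      have h2 : ((e (QuotientGroup.mk u)) : H) = φ u := rfl
      rw [h1, ← Subgroup.orderOf_coe, h2]
    rw [horder]
    -- k j divides orderOf (φ u)
    have hN0 : orderOf (φ u) ≠ 0 := (orderOf_pos (φ u)).ne'
    rw [← Nat.factorization_le_iff_dvd (hk j).ne' hN0, Finsupp.le_def]
    intro ℓ
    by_cases hz : (k j).factorization ℓ = 0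
    · simp [hz]
    · have hmem : ℓ ∈ (k j).primeFactors := by
        rw [← Nat.support_factorization]
        exact Finsupp.mem_support_iff.2 hz
      have hℓp : ℓ.Prime := Nat.prime_of_mem_primeFactors hmem
      have hℓk : ℓ ∣ k j := Nat.dvd_of_mem_primeFactors hmem
      have hkK : k j ∣ K := by
        rw [hKdef]
        exact Dvd.dvd.mul_left (Finset.dvd_prod_of_mem k (Finset.mem_univ j)) 2
      have hℓL : ℓ ∈ L := by
        rw [hLdef, Finset.mem_toList]
        exact Nat.mem_primeFactors.2 ⟨hℓp, hℓk.trans hkK, hK0.ne'⟩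
      have hdvd : ℓ ^ K ∣ orderOf (φ u) :=
        hords (p j) (Finset.mem_image.2 ⟨j, Finset.mem_univ j, rfl⟩) u hucoe ℓ hℓL
      have hKle : K ≤ (orderOf (φ u)).factorization ℓ :=
        (Nat.Prime.pow_dvd_iff_le_factorization hℓp hN0).1 hdvd
      -- (k j).factorization ℓ ≤ K
      have hvk : (k j).factorization ℓ ≤ K := by
        set v := (k j).factorization ℓ with hv
        have hpow : ℓ ^ v ∣ k j := Nat.ordProj_dvd _ _
        have h1 : ℓ ^ v ≤ k j := Nat.le_of_dvd (hk j) hpow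
        have h2 : v < 2 ^ v := Nat.lt_two_pow_self (n := v)
        have h3 : 2 ^ v ≤ ℓ ^ v := Nat.pow_le_pow_left hℓp.two_le v
        have h4 : k j ≤ K := Nat.le_of_dvd hK0 hkK
        omega
      omega
  case _ => -- order of -1
    have hcoe : ((-1 : (ZMod m)ˣ) : ZMod m) = (-1 : ZMod m) := by simp
    obtain ⟨hdvd2, h2L⟩ := hneg (-1) hcoe
    have h2mem : 2 ∈ L := by
      rw [hLdef, Finset.mem_toList]
      exact Nat.mem_primeFactors.2 ⟨Nat.prime_two, ⟨∏ j, k j, rfl⟩, hK0.ne'⟩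
    have horder : orderOf (QuotientGroup.mk (-1 : (ZMod m)ˣ) : (ZMod m)ˣ ⧸ φ.ker)
        = orderOf (φ (-1)) := by
      let e := QuotientGroup.quotientKerEquivRange φ
      have h1 : orderOf (QuotientGroup.mk (-1 : (ZMod m)ˣ) : (ZMod m)ˣ ⧸ φ.ker)
          = orderOf (e (QuotientGroup.mk (-1))) :=
        (orderOf_injective e.toMonoidHom e.injective _).symm
      have h2 : ((e (QuotientGroup.mk (-1 : (ZMod m)ˣ))) : H) = φ (-1) := rfl
      rw [h1, ← Subgroup.orderOf_coe, h2]
    rw [horder, h2L h2mem]
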